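/- Let (x_k) be the sequence in ℓ¹ defined by x_{2k-1} = 0 and x_{2k} = e_k (the k-th standard basis vector). Then the set of weak* cluster points of (x_k) in (ℓ¹)** = (ℓ∞)* has distance 0 to ℓ¹, the non-symmetrized Hausdorff distance d̂(clust(x_k), ℓ¹) equals 1, and the diameter δ(x_k) of the cluster set equals 2. -/

import Mathlib

open Filter Topology NormedSpace

/-- The set of weak* cluster points in the bidual of a sequence `(x k)` in `X`. -/
def weakStarClusterPoints {X : Type*} [NormedAddCommGroup X] [NormedSpace ℝ X]
    (x : ℕ → X) : Set (StrongDual ℝ (StrongDual ℝ X)) :=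
  {y | MapClusterPt (StrongDual.toWeakDual y) atTop
        fun k => StrongDual.toWeakDual (inclusionInDoubleDual ℝ X (x k))}

/-- `d̂(A, X) = sup_{a ∈ A} dist (a, X)` and `d(A, X) = inf_{a ∈ A} dist (a, X)`. -/
noncomputable def dHat {X : Type*} [NormedAddCommGroup X] [NormedSpace ℝ X]
    (A : Set (StrongDual ℝ (StrongDual ℝ X))) : ℝ :=
  sSup ((fun y => Metric.infDist y (Set.range fun v : X => inclusionInDoubleDual ℝ X v)) '' A)

noncomputable def dLow {X : Type*} [NormedAddCommGroup X] [NormedSpace ℝ X]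
    (A : Set (StrongDual ℝ (StrongDual ℝ X))) : ℝ :=
  sInf ((fun y => Metric.infDist y (Set.range fun v : X => inclusionInDoubleDual ℝ X v)) '' A)

/-- The sequence `0, e_0, 0, e_1, 0, e_2, …` in `ℓ¹` (`0`-indexed version of
`x_{2k-1} = 0`, `x_{2k} = e_k`). -/
noncomputable def zeroBasisSeq : ℕ → lp (fun _ : ℕ => ℝ) 1 := fun k =>
  if k % 2 = 0 then 0 else lp.single 1 (k / 2) (1 : ℝ)

noncomputable section Aux5

open Metric

local notation "X1" => lp (fun _ : ℕ => ℝ) 1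

lemma lp_one_summable (x : X1) : Summable fun n => ‖x n‖ := by
  have h := (lp.memℓp x).summable (p := 1) (by norm_num)
  simpa using h

lemma lp_one_norm_eq (x : X1) : ∑' n, ‖x n‖ = ‖x‖ := by
  have h := lp.hasSum_norm (p := 1) (E := fun _ : ℕ => ℝ) (by norm_num) x
  simpa using h.tsum_eq

lemma summable_signMul (s : ℕ → ℝ) (hs : ∀ n, |s n| ≤ 1) (x : X1) :
    Summable fun n => s n * x n := by
  refine Summable.of_norm_bounded (lp_one_summable x) fun n => ?_
  rw [norm_mul]
  calc ‖s n‖ * ‖x n‖ ≤ 1 * ‖x n‖ := by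
        gcongr
        exact (Real.norm_eq_abs _ ▸ hs n)
    _ = ‖x n‖ := one_mul _

/-- The functional on `ℓ¹` given by pairing with a bounded sign sequence. -/
def signDual (s : ℕ → ℝ) (hs : ∀ n, |s n| ≤ 1) : StrongDual ℝ X1 :=
  LinearMap.mkContinuous
    { toFun := fun x => ∑' n, s n * x n
      map_add' := fun x y => by
        simp only [lp.coeFn_add, Pi.add_apply, mul_add]
        exact Summable.tsum_add (summable_signMul s hs x) (summable_signMul s hs y)
      map_smul' := fun c x => by
        simp only [lp.coeFn_smul, Pi.smul_apply, smul_eq_mul, RingHom.id_apply]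
        rw [← tsum_mul_left]
        congr 1; funext n; ring }
    1 (fun x => by
      simp only [LinearMap.coe_mk, AddHom.coe_mk, one_mul]
      calc ‖∑' n, s n * x n‖ ≤ ∑' n, ‖s n * x n‖ :=
            norm_tsum_le_tsum_norm ((summable_signMul s hs x).norm)
        _ ≤ ∑' n, ‖x n‖ := by
            refine Summable.tsum_le_tsum (fun n => ?_) (summable_signMul s hs x).norm (lp_one_summable x)
            rw [norm_mul]
            calc ‖s n‖ * ‖x n‖ ≤ 1 * ‖x n‖ := by
                  gcongr; exact (Real.norm_eq_abs _ ▸ hs n)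
              _ = ‖x n‖ := one_mul _
        _ = ‖x‖ := lp_one_norm_eq x)

lemma signDual_apply (s : ℕ → ℝ) (hs : ∀ n, |s n| ≤ 1) (x : X1) :
    signDual s hs x = ∑' n, s n * x n := rfl

lemma signDual_norm_le (s : ℕ → ℝ) (hs : ∀ n, |s n| ≤ 1) : ‖signDual s hs‖ ≤ 1 :=
  LinearMap.mkContinuous_norm_le _ zero_le_one _

lemma signDual_single (s : ℕ → ℝ) (hs : ∀ n, |s n| ≤ 1) (k : ℕ) :
    signDual s hs (lp.single 1 k (1 : ℝ)) = s k := by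
  rw [signDual_apply]
  have h0 : ∀ n, n ≠ k → s n * (lp.single 1 k (1 : ℝ) : lp (fun _ : ℕ => ℝ) 1) n = 0 := by
    intro n hn
    rw [lp.single_apply_ne 1 k _ hn, mul_zero]
  rw [tsum_eq_single k h0, lp.single_apply_self, mul_one]

lemma zeroBasisSeq_odd (k : ℕ) : zeroBasisSeq (2 * k + 1) = lp.single 1 k (1 : ℝ) := by
  have h1 : (2 * k + 1) % 2 = 1 := by omega
  have h2 : (2 * k + 1) / 2 = k := by omega
  simp [zeroBasisSeq, h1, h2]

lemma zeroBasisSeq_even (k : ℕ) : zeroBasisSeq (2 * k) = 0 := by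
  simp [zeroBasisSeq, Nat.mul_mod_right]

lemma norm_single_one (k : ℕ) : ‖(lp.single 1 k (1 : ℝ) : lp (fun _ : ℕ => ℝ) 1)‖ = 1 := by
  have h := lp.norm_single (p := 1) (E := fun _ : ℕ => ℝ) (by norm_num)
    k (1 : ℝ)
  simpa using h

lemma norm_zeroBasisSeq_le (k : ℕ) : ‖zeroBasisSeq k‖ ≤ 1 := by
  unfold zeroBasisSeq
  split
  · simp
  · exact le_of_eq (norm_single_one _)

/-- The sequence `k ↦ ι(e_k)` in the weak* bidual. -/
def fseq : ℕ → WeakDual ℝ (StrongDual ℝ (lp (fun _ : ℕ => ℝ) 1)) := fun k =>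
  StrongDual.toWeakDual (inclusionInDoubleDual ℝ (lp (fun _ : ℕ => ℝ) 1)
    (lp.single 1 k (1 : ℝ)))

/-- The closed unit ball of the bidual, in the weak* topology. -/
def Kball : Set (WeakDual ℝ (StrongDual ℝ (lp (fun _ : ℕ => ℝ) 1))) :=
  WeakDual.toStrongDual ⁻¹' closedBall (0 : StrongDual ℝ (StrongDual ℝ (lp (fun _ : ℕ => ℝ) 1))) 1

lemma fseq_mem_Kball (k : ℕ) : fseq k ∈ Kball := by
  simp only [Kball, Set.mem_preimage, mem_closedBall_zero_iff]
  refine (mem_closedBall_zero_iff (E := StrongDual ℝ (StrongDual ℝ X1))).2 ?_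
  calc ‖WeakDual.toStrongDual (fseq k)‖
      = ‖inclusionInDoubleDual ℝ X1 (lp.single 1 k (1 : ℝ))‖ := rfl
    _ ≤ ‖(lp.single 1 k (1 : ℝ) : lp (fun _ : ℕ => ℝ) 1)‖ := double_dual_bound ℝ X1 _
    _ ≤ 1 := le_of_eq (norm_single_one k)

lemma exists_cluster (U : Ultrafilter ℕ) (hU : (U : Filter ℕ) ≤ atTop) :
    ∃ y : StrongDual ℝ (StrongDual ℝ X1),
      y ∈ weakStarClusterPoints zeroBasisSeq ∧ ‖y‖ ≤ 1 ∧
      ∀ g : StrongDual ℝ X1,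
        Tendsto (fun k => g (lp.single 1 k (1 : ℝ) : lp (fun _ : ℕ => ℝ) 1)) (U : Filter ℕ)
          (𝓝 (y g)) := by
  classical
  have hK : IsCompact Kball := WeakDual.isCompact_closedBall (𝕜 := ℝ) (E := StrongDual ℝ X1) 0 1
  have hle : ↑(U.map fseq) ≤ 𝓟 Kball := by
    rw [Ultrafilter.coe_map, le_principal_iff]
    exact mem_map.2 (univ_mem' fseq_mem_Kball)
  obtain ⟨a, haK, ha⟩ := hK.ultrafilter_le_nhds (U.map fseq) hle
  have hTend : Tendsto fseq (U : Filter ℕ) (𝓝 a) := by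
    rwa [Ultrafilter.coe_map] at ha
  refine ⟨WeakDual.toStrongDual a, ?_, ?_, ?_⟩
  · show MapClusterPt (StrongDual.toWeakDual (WeakDual.toStrongDual a)) atTop _
    have hwa : StrongDual.toWeakDual (WeakDual.toStrongDual a) = a := rfl
    rw [hwa]
    have hφ : Tendsto (fun k => 2 * k + 1) (U : Filter ℕ) atTop :=
      (tendsto_atTop_atTop.2 fun b => ⟨b, fun a hab => by omega⟩).mono_left hU
    refine MapClusterPt.of_comp hφ ?_
    have heq : ((fun k => StrongDual.toWeakDual
        (inclusionInDoubleDual ℝ X1 (zeroBasisSeq k))) ∘ fun k => 2 * k + 1) = fseq := by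
      funext k
      simp only [Function.comp_apply, fseq, zeroBasisSeq_odd]
    rw [heq]
    exact hTend.mapClusterPt
  · simpa [Kball, mem_closedBall_zero_iff, dist_zero_right (WeakDual.toStrongDual a)] using haK
  · intro g
    have := (tendsto_iff_forall_eval_tendsto_topDualPairing.1 hTend) g
    exact this

lemma norm_le_one_of_mem {y : StrongDual ℝ (StrongDual ℝ X1)}
    (hy : y ∈ weakStarClusterPoints zeroBasisSeq) : ‖y‖ ≤ 1 := by
  have hcl : IsClosed Kball :=
    (WeakDual.isCompact_closedBall (𝕜 := ℝ) (E := StrongDual ℝ X1) 0 1).isClosed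
  have hmem : ∀ k, (StrongDual.toWeakDual
      (inclusionInDoubleDual ℝ X1 (zeroBasisSeq k))) ∈ Kball := by
    intro k
    simp only [Kball, Set.mem_preimage, mem_closedBall_zero_iff]
    refine (mem_closedBall_zero_iff (E := StrongDual ℝ (StrongDual ℝ X1))).2 ?_
    calc ‖WeakDual.toStrongDual (StrongDual.toWeakDual
          (inclusionInDoubleDual ℝ X1 (zeroBasisSeq k)))‖
        = ‖inclusionInDoubleDual ℝ X1 (zeroBasisSeq k)‖ := rfl
      _ ≤ ‖zeroBasisSeq k‖ := double_dual_bound ℝ X1 _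
      _ ≤ 1 := norm_zeroBasisSeq_le k
  have h1 : ClusterPt (StrongDual.toWeakDual y) (𝓟 Kball) :=
    hy.clusterPt.mono (le_principal_iff.2 (mem_map.2 (univ_mem' hmem)))
  have h2 : StrongDual.toWeakDual y ∈ Kball := by
    rw [← hcl.closure_eq]
    exact mem_closure_iff_clusterPt.2 h1
  simpa [Kball, mem_closedBall_zero_iff, dist_zero_right y] using h2

lemma zero_mem_cluster : (0 : StrongDual ℝ (StrongDual ℝ X1)) ∈ weakStarClusterPoints zeroBasisSeq := by
  show MapClusterPt _ _ _
  have hφ : Tendsto (fun k : ℕ => 2 * k) atTop atTop :=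
    tendsto_atTop_atTop.2 fun b => ⟨b, fun a h => by omega⟩
  refine MapClusterPt.of_comp hφ ?_
  have heq : ((fun k => StrongDual.toWeakDual
      (inclusionInDoubleDual ℝ X1 (zeroBasisSeq k))) ∘ fun k => 2 * k)
      = fun _ => StrongDual.toWeakDual (0 : StrongDual ℝ (StrongDual ℝ X1)) := by
    funext k
    simp [Function.comp, zeroBasisSeq_even]
  rw [heq]
  exact tendsto_const_nhds.mapClusterPt

lemma exists_ultra (P : ℕ → Prop) (hP : ∀ N, ∃ n, N ≤ n ∧ P n) :
    ∃ U : Ultrafilter ℕ, (U : Filter ℕ) ≤ atTop ∧ {n | P n} ∈ U := by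
  have hfreq : ∃ᶠ n in atTop, P n :=
    frequently_atTop.2 fun a => (hP a).imp fun n h => ⟨h.1, h.2⟩
  have hne : (atTop ⊓ 𝓟 {n | P n}).NeBot := frequently_iff_neBot.1 hfreq
  refine ⟨Ultrafilter.of (atTop ⊓ 𝓟 {n | P n}), (Ultrafilter.of_le _).trans inf_le_left, ?_⟩
  exact (Ultrafilter.of_le _) (mem_inf_of_right (mem_principal_self _))

lemma tail_bound (m : ℕ) : ∀ n : ℕ, |(fun n => if m ≤ n then (1 : ℝ) else 0) n| ≤ 1 :=
  fun n => by by_cases h : m ≤ n <;> simp [h]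

/-- Tail sums of an `ℓ¹` function tend to `0`. -/
lemma tail_tendsto_zero (x : X1) :
    Tendsto (fun m => ∑' n, ‖x (n + m)‖) atTop (𝓝 0) := by
  have hsum := lp_one_summable x
  have h1 := hsum.hasSum.tendsto_sum_nat
  have h2 : Tendsto (fun m => (∑' n, ‖x n‖) - ∑ i ∈ Finset.range m, ‖x i‖) atTop
      (𝓝 ((∑' n, ‖x n‖) - ∑' n, ‖x n‖)) := tendsto_const_nhds.sub h1
  rw [sub_self] at h2
  refine h2.congr fun m => ?_
  have h3 := Summable.sum_add_tsum_nat_add (f := fun n => ‖x n‖) m hsum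
  linarith

/-- The value of a sign functional given by the indicator of `{n | m ≤ n}` is the tail sum. -/
lemma tailDual_eval (m : ℕ) (x : X1) :
    signDual (fun n => if m ≤ n then 1 else 0) (tail_bound m) x
      = ∑' n, x (n + m) := by
  rw [signDual_apply]
  have hsum : Summable fun n => (if m ≤ n then (1 : ℝ) else 0) * x n :=
    summable_signMul _ (tail_bound m) x
  have h := Summable.sum_add_tsum_nat_add (f := fun n => (if m ≤ n then (1 : ℝ) else 0) * x n) m hsum
  have hz : ∑ i ∈ Finset.range m, (if m ≤ i then (1 : ℝ) else 0) * x i = 0 := by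
    refine Finset.sum_eq_zero fun i hi => ?_
    rw [if_neg (by simpa using Finset.mem_range.1 hi), zero_mul]
  have he : ∀ n : ℕ, (if m ≤ n + m then (1 : ℝ) else 0) * x (n + m) = x (n + m) := fun n => by
    rw [if_pos (Nat.le_add_left m n), one_mul]
  rw [hz, zero_add] at h
  rw [← h]
  exact tsum_congr he

set_option maxHeartbeats 1000000 in
/-- The distinguished cluster points: they evaluate tails to `1`, hence are far from `ℓ¹`. -/
lemma cluster_infDist_eq_one (U : Ultrafilter ℕ) (hU : (U : Filter ℕ) ≤ atTop)
    (y : StrongDual ℝ (StrongDual ℝ X1)) (hy1 : ‖y‖ ≤ 1)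
    (hy : ∀ g : StrongDual ℝ X1,
      Tendsto (fun k => g (lp.single 1 k (1 : ℝ) : lp (fun _ : ℕ => ℝ) 1)) (U : Filter ℕ)
        (𝓝 (y g))) :
    Metric.infDist y (Set.range fun v : X1 => inclusionInDoubleDual ℝ X1 v) = 1 := by
  classical
  -- y evaluates each tail functional to 1
  have htail : ∀ m : ℕ, y (signDual (fun n => if m ≤ n then 1 else 0)
      (tail_bound m)) = 1 := by
    intro m
    set g := signDual (fun n => if m ≤ n then 1 else 0) (tail_bound m) with hg
    have h1 : Tendsto (fun k => g (lp.single 1 k (1 : ℝ) : lp (fun _ : ℕ => ℝ) 1))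
        (U : Filter ℕ) (𝓝 (y g)) := hy g
    have h2 : Tendsto (fun k => g (lp.single 1 k (1 : ℝ) : lp (fun _ : ℕ => ℝ) 1))
        (U : Filter ℕ) (𝓝 1) := by
      have hev : ∀ᶠ k in (U : Filter ℕ),
          g (lp.single 1 k (1 : ℝ) : lp (fun _ : ℕ => ℝ) 1) = 1 := by
        filter_upwards [hU (eventually_ge_atTop m)] with k hk
        rw [hg, signDual_single, if_pos hk]
      exact Tendsto.congr' (hev.mono fun k hk => hk.symm) tendsto_const_nhds
    exact tendsto_nhds_unique h1 h2
  -- lower bound on distance to any element of ℓ¹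
  have hdist : ∀ x : X1, 1 ≤ ‖y - inclusionInDoubleDual ℝ X1 x‖ := by
    intro x
    have key : ∀ m : ℕ, 1 - (∑' n, ‖x (n + m)‖) ≤ ‖y - inclusionInDoubleDual ℝ X1 x‖ := by
      intro m
      set g := signDual (fun n => if m ≤ n then 1 else 0) (tail_bound m)
        with hg
      have hgnorm : ‖g‖ ≤ 1 := signDual_norm_le _ _
      have heval : (y - inclusionInDoubleDual ℝ X1 x) g = 1 - ∑' n, x (n + m) := by
        rw [ContinuousLinearMap.sub_apply, htail m, dual_def, hg, tailDual_eval]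
      have habs : |∑' n, x (n + m)| ≤ ∑' n, ‖x (n + m)‖ := by
        have := norm_tsum_le_tsum_norm (f := fun n => x (n + m))
          ((summable_nat_add_iff m).2 (lp_one_summable x))
        simpa using this
      calc 1 - (∑' n, ‖x (n + m)‖) ≤ 1 - ∑' n, x (n + m) := by
            have : ∑' n, x (n + m) ≤ |∑' n, x (n + m)| := le_abs_self _
            linarith
        _ ≤ ‖(y - inclusionInDoubleDual ℝ X1 x) g‖ := by
            rw [heval, Real.norm_eq_abs]
            exact le_abs_self _
        _ ≤ ‖y - inclusionInDoubleDual ℝ X1 x‖ * ‖g‖ := ContinuousLinearMap.le_opNorm _ _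
        _ ≤ ‖y - inclusionInDoubleDual ℝ X1 x‖ * 1 := by
            gcongr
        _ = ‖y - inclusionInDoubleDual ℝ X1 x‖ := mul_one _
    have hlim : Tendsto (fun m => 1 - (∑' n, ‖x (n + m)‖)) atTop (𝓝 1) := by
      have h := (tail_tendsto_zero x).const_sub 1
      simpa using h
    exact le_of_tendsto hlim (Eventually.of_forall key)
  refine le_antisymm ?_ ?_
  · -- infDist ≤ dist to ι 0 = ‖y‖ ≤ 1
    have h0 : (0 : StrongDual ℝ (StrongDual ℝ X1)) ∈
        (Set.range fun v : X1 => inclusionInDoubleDual ℝ X1 v) := by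
      exact ⟨0, (inclusionInDoubleDual ℝ (lp (fun _ : ℕ => ℝ) 1)).map_zero⟩
    calc Metric.infDist y _ ≤ dist y 0 := Metric.infDist_le_dist_of_mem h0
      _ = ‖y‖ := by rw [dist_zero_right y]
      _ ≤ 1 := hy1
  · by_contra h
    push_neg at h
    have hne : (Set.range fun v : X1 => inclusionInDoubleDual ℝ X1 v).Nonempty := by
      exact ⟨_, ⟨0, rfl⟩⟩
    obtain ⟨z, hz, hlt⟩ := (Metric.infDist_lt_iff hne).1 h
    obtain ⟨x, rfl⟩ := hz
    rw [dist_eq_norm y] at hlt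
    exact absurd hlt (not_lt.2 (hdist x))

lemma cluster_subset_ball :
    weakStarClusterPoints zeroBasisSeq ⊆ closedBall (0 : StrongDual ℝ (StrongDual ℝ X1)) 1 := fun y hy =>
  (mem_closedBall_zero_iff (E := StrongDual ℝ (StrongDual ℝ X1))).2 (norm_le_one_of_mem hy)

end Aux5

set_option maxHeartbeats 2000000 in
/-- For the sequence `x_{2k-1} = 0`, `x_{2k} = e_k` in `ℓ¹`:
`d(clust(x_k), ℓ¹) = 0`, `d̂(clust(x_k), ℓ¹) = 1` and `δ(x_k) = diam (clust (x_k)) = 2`. -/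
theorem statement5 :
    dLow (weakStarClusterPoints zeroBasisSeq) = 0 ∧
    dHat (weakStarClusterPoints zeroBasisSeq) = 1 ∧
    Metric.diam (weakStarClusterPoints zeroBasisSeq) = 2 := by
  classical
  -- two ultrafilters: one containing the evens, one the odds
  obtain ⟨U, hU, hUmem⟩ := exists_ultra (fun n => n % 2 = 0)
    (fun N => ⟨2 * N, by omega, by omega⟩)
  obtain ⟨V, hV, hVmem⟩ := exists_ultra (fun n => n % 2 = 1)
    (fun N => ⟨2 * N + 1, by omega, by omega⟩)
  obtain ⟨y₁, hy₁mem, hy₁norm, hy₁ev⟩ := exists_cluster U hU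
  obtain ⟨y₂, hy₂mem, hy₂norm, hy₂ev⟩ := exists_cluster V hV
  -- the distinguished sign functional
  set s : ℕ → ℝ := fun n => if n % 2 = 0 then 1 else -1 with hs_def
  have hs : ∀ n, |s n| ≤ 1 := fun n => by by_cases h : n % 2 = 0 <;> simp [hs_def, h]
  set g := signDual s hs with hg
  have hgnorm : ‖g‖ ≤ 1 := signDual_norm_le _ _
  have hy₁g : y₁ g = 1 := by
    refine tendsto_nhds_unique (hy₁ev g) ?_
    have hev : ∀ᶠ k in (U : Filter ℕ),
        g (lp.single 1 k (1 : ℝ) : lp (fun _ : ℕ => ℝ) 1) = 1 := by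
      filter_upwards [hUmem] with k hk
      rw [hg, signDual_single]
      simp [hs_def, hk]
    exact Tendsto.congr' (hev.mono fun k hk => hk.symm) tendsto_const_nhds
  have hy₂g : y₂ g = -1 := by
    refine tendsto_nhds_unique (hy₂ev g) ?_
    have hev : ∀ᶠ k in (V : Filter ℕ),
        g (lp.single 1 k (1 : ℝ) : lp (fun _ : ℕ => ℝ) 1) = -1 := by
      filter_upwards [hVmem] with k hk
      rw [hg, signDual_single]
      have hk0 : ¬ (k % 2 = 0) := by omega
      simp [hs_def, hk0]
    exact Tendsto.congr' (hev.mono fun k hk => hk.symm) tendsto_const_nhds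
  have hdist12 : (2 : ℝ) ≤ ‖y₁ - y₂‖ := by
    have heval : (y₁ - y₂) g = 2 := by
      rw [ContinuousLinearMap.sub_apply, hy₁g, hy₂g]; norm_num
    calc (2 : ℝ) = ‖(y₁ - y₂) g‖ := by rw [heval]; simp
      _ ≤ ‖y₁ - y₂‖ * ‖g‖ := ContinuousLinearMap.le_opNorm _ _
      _ ≤ ‖y₁ - y₂‖ * 1 := by gcongr
      _ = ‖y₁ - y₂‖ := mul_one _
  -- distances to ℓ¹
  have hd₁ : Metric.infDist y₁ (Set.range fun v : lp (fun _ : ℕ => ℝ) 1 =>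
      inclusionInDoubleDual ℝ (lp (fun _ : ℕ => ℝ) 1) v) = 1 :=
    cluster_infDist_eq_one U hU y₁ hy₁norm hy₁ev
  have hd0 : Metric.infDist (0 : StrongDual ℝ (StrongDual ℝ (lp (fun _ : ℕ => ℝ) 1)))
      (Set.range fun v : lp (fun _ : ℕ => ℝ) 1 =>
        inclusionInDoubleDual ℝ (lp (fun _ : ℕ => ℝ) 1) v) = 0 := by
    refine Metric.infDist_zero_of_mem ?_
    exact ⟨0, (inclusionInDoubleDual ℝ (lp (fun _ : ℕ => ℝ) 1)).map_zero⟩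
  have hub : ∀ y ∈ weakStarClusterPoints zeroBasisSeq,
      Metric.infDist y (Set.range fun v : lp (fun _ : ℕ => ℝ) 1 =>
        inclusionInDoubleDual ℝ (lp (fun _ : ℕ => ℝ) 1) v) ≤ 1 := by
    intro y hy
    have h0 : (0 : StrongDual ℝ (StrongDual ℝ (lp (fun _ : ℕ => ℝ) 1))) ∈
        (Set.range fun v : lp (fun _ : ℕ => ℝ) 1 =>
          inclusionInDoubleDual ℝ (lp (fun _ : ℕ => ℝ) 1) v) := by
      exact ⟨0, (inclusionInDoubleDual ℝ (lp (fun _ : ℕ => ℝ) 1)).map_zero⟩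
    calc Metric.infDist y _ ≤ dist y 0 := Metric.infDist_le_dist_of_mem h0
      _ = ‖y‖ := by rw [dist_zero_right y]
      _ ≤ 1 := norm_le_one_of_mem hy
  refine ⟨?_, ?_, ?_⟩
  · -- dLow = 0
    unfold dLow
    refine le_antisymm ?_ ?_
    · exact csInf_le ⟨0, fun r ⟨y, _, hr⟩ => hr ▸ Metric.infDist_nonneg⟩
        ⟨0, zero_mem_cluster, hd0⟩
    · refine le_csInf ⟨0, ⟨0, zero_mem_cluster, hd0⟩⟩ ?_
      rintro r ⟨y, _, rfl⟩
      exact Metric.infDist_nonneg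
  · -- dHat = 1
    unfold dHat
    refine le_antisymm ?_ ?_
    · refine csSup_le ⟨1, ⟨y₁, hy₁mem, hd₁⟩⟩ ?_
      rintro r ⟨y, hy, rfl⟩
      exact hub y hy
    · refine le_csSup ⟨1, ?_⟩ ⟨y₁, hy₁mem, hd₁⟩
      rintro r ⟨y, hy, rfl⟩
      exact hub y hy
  · -- diam = 2
    refine le_antisymm ?_ ?_
    · refine Metric.diam_le_of_forall_dist_le (by norm_num) ?_
      intro a ha b hb
      rw [dist_eq_norm a b]
      calc ‖a - b‖ ≤ ‖a‖ + ‖b‖ := norm_sub_le a b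
        _ ≤ 1 + 1 := add_le_add (norm_le_one_of_mem ha) (norm_le_one_of_mem hb)
        _ = 2 := by norm_num
    · have hb : Bornology.IsBounded (weakStarClusterPoints zeroBasisSeq) :=
        Metric.isBounded_closedBall.subset cluster_subset_ball
      calc (2 : ℝ) ≤ ‖y₁ - y₂‖ := hdist12
        _ = dist y₁ y₂ := (dist_eq_norm y₁ y₂).symm
        _ ≤ Metric.diam (weakStarClusterPoints zeroBasisSeq) :=
            Metric.dist_le_diam_of_mem hb hy₁mem hy₂mem
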